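/- For complex parameters a₁, a₂, b₁, b₂ satisfying the ADHM equations a₁b₁ + a₂b₂ = 0 and |a₁|² + |a₂|² = |b₁|² + |b₂|² > 0, and for every (x,y) ∈ ℂ², the map α : ℂ → ℂ⁴ given by α(t) = (x t, y t, a₁ t, a₂ t) is injective, the map β : ℂ⁴ → ℂ given by β(v) = -y v₁ + x v₂ + b₁ v₃ + b₂ v₄ is surjective, and β ∘ α = 0. -/

import Mathlib

/-- For ADHM data `(a₁,a₂,b₁,b₂)` with `a₁b₁ + a₂b₂ = 0` and
`|a₁|² + |a₂|² = |b₁|² + |b₂|² > 0`, and any `(x,y) ∈ ℂ²`, the monad map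
`α = (x,y,a₁,a₂)ᵗ` is injective, `β = (-y,x,b₁,b₂)` is surjective, and `β ∘ α = 0`. -/
theorem adhm_monad (a₁ a₂ b₁ b₂ : ℂ)
    (hADHM : a₁ * b₁ + a₂ * b₂ = 0)
    (hnorm : ‖a₁‖ ^ 2 + ‖a₂‖ ^ 2
      = ‖b₁‖ ^ 2 + ‖b₂‖ ^ 2)
    (hpos : 0 < ‖a₁‖ ^ 2 + ‖a₂‖ ^ 2)
    (x y : ℂ) :
    Function.Injective (fun t : ℂ => ![x * t, y * t, a₁ * t, a₂ * t]) ∧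
    Function.Surjective (fun v : Fin 4 → ℂ => -y * v 0 + x * v 1 + b₁ * v 2 + b₂ * v 3) ∧
    (fun v : Fin 4 → ℂ => -y * v 0 + x * v 1 + b₁ * v 2 + b₂ * v 3) ∘
      (fun t : ℂ => ![x * t, y * t, a₁ * t, a₂ * t]) = 0 := by
  have ha : a₁ ≠ 0 ∨ a₂ ≠ 0 := by
    by_contra h
    push_neg at h
    rw [h.1, h.2] at hpos
    simp at hpos
  have hb : b₁ ≠ 0 ∨ b₂ ≠ 0 := by
    by_contra h
    push_neg at h
    rw [hnorm, h.1, h.2] at hpos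
    simp at hpos
  refine ⟨?_, ?_, ?_⟩
  · intro t s h
    rcases ha with ha | ha
    · have := congrFun h 2
      simp at this
      exact this.resolve_right ha
    · have := congrFun h 3
      simp at this
      exact this.resolve_right ha
  · intro c
    rcases hb with hb | hb
    · exact ⟨![0, 0, c / b₁, 0], by simp; field_simp⟩
    · exact ⟨![0, 0, 0, c / b₂], by simp; field_simp⟩
  · funext t
    simp only [Function.comp_apply]
    simp [Matrix.cons_val_zero, Matrix.cons_val_one]
    ring_nf
    linear_combination t * hADHM
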